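/- Let 𝒮 = (S_1,…,S_n) be a list of finite nonempty subsets of a finite universe U = ⋃_i S_i, and let G and c be the genome and CNP constructed from 𝒮 as described. If there exists a sequence E of k deletion events (no duplications) such that cnp(G⟨E⟩) = c, then 𝒮 admits a set cover of cardinality at most k. -/

import Mathlib

/-- An event is either a deletion `del i j` (removing the substring from position `i`
to position `j`, 1-based) or a duplication `dup i j p` (copying the substring from
position `i` to position `j` and inserting the copy after position `p`). -/
inductive GEvent where
  | del (i j : ℕ)
  | dup (i j p : ℕ)
deriving DecidableEq

/-- Applying an event to a genome (a list of characters). -/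
def applyEvent {α : Type*} (G : List α) : GEvent → List α
  | .del i j => G.take (i - 1) ++ G.drop j
  | .dup i j p => G.take p ++ ((G.drop (i - 1)).take (j - i + 1)) ++ G.drop p

/-- Validity of an event on a genome: `del i j` requires `1 ≤ i ≤ j ≤ |G|`;
`dup i j p` requires `1 ≤ i ≤ j ≤ |G|` and `p ∈ {0,…,i−1} ∪ {j,…,|G|}`. -/
def GEvent.Valid {α : Type*} (G : List α) : GEvent → Prop
  | .del i j => 1 ≤ i ∧ i ≤ j ∧ j ≤ G.length
  | .dup i j p => 1 ≤ i ∧ i ≤ j ∧ j ≤ G.length ∧ (p ≤ i - 1 ∨ (j ≤ p ∧ p ≤ G.length))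

/-- `applyEvents G E` is `G⟨E⟩`, the genome obtained by successively applying
the events of `E` to `G`. -/
def applyEvents {α : Type*} (G : List α) : List GEvent → List α
  | [] => G
  | e :: E => applyEvents (applyEvent G e) E

/-- A sequence of events is valid on `G` if each event is valid on the genome
obtained by applying the previous events. -/
def ValidSeq {α : Type*} (G : List α) : List GEvent → Prop
  | [] => True
  | e :: E => e.Valid G ∧ ValidSeq (applyEvent G e) E

/-- The copy-number profile of a genome: the number of occurrences of each character. -/
def cnp {α : Type*} [DecidableEq α] (G : List α) : α → ℕ := fun s => G.count s

/-- The Genome-to-CNP distance: the minimum length of a valid event sequence turning `G`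
into a genome with CNP `c` (`⊤` if there is none). -/
noncomputable def dGCNP {α : Type*} [DecidableEq α] (G : List α) (c : α → ℕ) : ℕ∞ :=
  sInf { k : ℕ∞ | ∃ E : List GEvent,
    ValidSeq G E ∧ (E.length : ℕ∞) = k ∧ cnp (applyEvents G E) = c }

/-- The genome constructed from a SET-COVER instance: the alphabet is `Fin n ⊕ V`, where
`Sum.inl i` is the separator character `σᵢ` and `Sum.inr u` is the character `γᵤ`;
`q i` lists the elements of `S i` (each exactly once), and
`G = σ₁ q(S₁) σ₂ q(S₂) ⋯ σₙ q(Sₙ)`. -/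
def scGenome {V : Type*} (n : ℕ) (q : Fin n → List V) : List (Fin n ⊕ V) :=
  (List.finRange n).flatMap (fun i => Sum.inl i :: (q i).map Sum.inr)

/-- The CNP constructed from a SET-COVER instance: `c(σᵢ) = 1` and `c(γᵤ) = f(u) − 1`,
where `f(u)` is the number of sets of the instance containing `u`. -/
def scCNP {V : Type*} [Fintype V] [DecidableEq V] (n : ℕ) (S : Fin n → Finset V) :
    (Fin n ⊕ V) → ℕ
  | Sum.inl _ => 1
  | Sum.inr u => (Finset.univ.filter fun i => u ∈ S i).card - 1

namespace SCAux

/-- The genome associated to a list of blocks: each block `(i, s)` contributes the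
separator `σᵢ` followed by the characters of `s`. -/
def blocks {n : ℕ} {V : Type*} (L : List (Fin n × List V)) : List (Fin n ⊕ V) :=
  L.flatMap fun p => Sum.inl p.1 :: p.2.map Sum.inr

lemma blocks_nil {n : ℕ} {V : Type*} : blocks ([] : List (Fin n × List V)) = [] := rfl

lemma blocks_cons {n : ℕ} {V : Type*} (p : Fin n × List V) (L : List (Fin n × List V)) :
    blocks (p :: L) = Sum.inl p.1 :: (p.2.map Sum.inr ++ blocks L) := by
  simp [blocks]

lemma blocks_append {n : ℕ} {V : Type*} (L₁ L₂ : List (Fin n × List V)) :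
    blocks (L₁ ++ L₂) = blocks L₁ ++ blocks L₂ := by
  simp [blocks]

lemma cnp_sublist_le {α : Type*} [DecidableEq α] {l₁ l₂ : List α} (h : l₁.Sublist l₂)
    (x : α) : cnp l₁ x ≤ cnp l₂ x := by
  unfold cnp; exact h.count_le x

lemma cnp_append {α : Type*} [DecidableEq α] (l₁ l₂ : List α) (x : α) :
    cnp (l₁ ++ l₂) x = cnp l₁ x + cnp l₂ x := by
  unfold cnp; exact List.count_append

lemma cnp_pos_iff {α : Type*} [DecidableEq α] {l : List α} {x : α} :
    0 < cnp l x ↔ x ∈ l := by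
  unfold cnp; exact List.count_pos_iff

lemma cnp_eq_zero {α : Type*} [DecidableEq α] {l : List α} {x : α} (h : x ∉ l) :
    cnp l x = 0 := by
  unfold cnp; exact List.count_eq_zero_of_not_mem h

lemma cnp_cons {α : Type*} [DecidableEq α] (b : α) (l : List α) (x : α) :
    cnp (b :: l) x = cnp l x + if b = x then 1 else 0 := by
  unfold cnp
  rw [List.count_cons]
  congr 1
  simp [beq_iff_eq]

lemma cnp_map_inr {n : ℕ} {V : Type*} [DecidableEq V] (s : List V) (u : V) :
    cnp (s.map (Sum.inr : V → Fin n ⊕ V)) (Sum.inr u) = s.count u := by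
  unfold cnp
  induction s with
  | nil => simp
  | cons a s ih => simp only [List.map_cons, List.count_cons, ih]; simp

lemma count_inl_blocks {n : ℕ} {V : Type*} [DecidableEq V] (i : Fin n)
    (L : List (Fin n × List V)) :
    cnp (blocks L) (Sum.inl i) = (L.map Prod.fst).count i := by
  induction L with
  | nil => simp [cnp, blocks_nil]
  | cons p L ih =>
    have h0 : (Sum.inl i : Fin n ⊕ V) ∉ p.2.map Sum.inr := by simp
    rw [blocks_cons, cnp_cons, cnp_append, cnp_eq_zero h0, ih,
      List.map_cons, List.count_cons]
    simp [beq_iff_eq]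

lemma count_inr_blocks {n : ℕ} {V : Type*} [DecidableEq V] (u : V)
    (L : List (Fin n × List V)) :
    cnp (blocks L) (Sum.inr u) = (L.map fun p => p.2.count u).sum := by
  induction L with
  | nil => simp [cnp, blocks_nil]
  | cons p L ih =>
    rw [blocks_cons, cnp_cons, cnp_append, cnp_map_inr, ih]
    simp

/-- Sequences of valid deletions produce sublists. -/
lemma applyEvents_sublist {α : Type*} :
    ∀ (E : List GEvent) (H : List α),
      (∀ e ∈ E, ∃ i j, e = GEvent.del i j) → ValidSeq H E →
      List.Sublist (applyEvents H E) H := by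
  intro E
  induction E with
  | nil => intro H _ _; exact List.Sublist.refl _
  | cons e E ih =>
    intro H hdel hv
    obtain ⟨a, b, rfl⟩ := hdel _ List.mem_cons_self
    obtain ⟨ha, hab, hb⟩ := hv.1
    have h1 : List.Sublist (applyEvent H (.del a b)) H := by
      show List.Sublist (H.take (a-1) ++ H.drop b) H
      conv_rhs => rw [← List.take_append_drop (a-1) H]
      refine List.Sublist.append_left ?_ _
      rw [show H.drop b = (H.drop (a-1)).drop (b-(a-1)) by
        rw [List.drop_drop]; congr 1; omega]
      exact List.drop_sublist _ _
    exact (ih _ (fun e he => hdel e (List.mem_cons_of_mem _ he)) hv.2).trans h1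

/-- Splitting lemma: a nonempty contiguous chunk of a block genome containing no
separator lies within a single block, and removing it keeps the block structure. -/
lemma blocks_split {n : ℕ} {V : Type*} :
    ∀ (L : List (Fin n × List V)) (A C B : List (Fin n ⊕ V)),
      blocks L = A ++ C ++ B → C ≠ [] → (∀ i : Fin n, Sum.inl i ∉ C) →
      ∃ (L₁ L₂ : List (Fin n × List V)) (i₀ : Fin n) (s s' : List V),
        L = L₁ ++ (i₀, s) :: L₂ ∧ A ++ B = blocks (L₁ ++ (i₀, s') :: L₂) ∧
        s'.Sublist s ∧ ∀ x ∈ C, ∃ u ∈ s, x = Sum.inr u := by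
  intro L
  induction L with
  | nil =>
    intro A C B h hC _
    exfalso
    apply hC
    have := congrArg List.length h
    simp [blocks_nil] at this
    exact List.eq_nil_of_length_eq_zero (by omega)
  | cons p L ih =>
    intro A C B h hC hno
    obtain ⟨i, s⟩ := p
    rw [blocks_cons] at h
    cases A with
    | nil =>
      exfalso
      cases C with
      | nil => exact hC rfl
      | cons c C' =>
        simp only [List.nil_append, List.cons_append, List.cons.injEq] at h
        exact hno i (by rw [h.1]; exact List.mem_cons_self)
    | cons a A' =>
      have h' : Sum.inl i = a ∧ s.map Sum.inr ++ blocks L = A' ++ (C ++ B) := by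
        simp only [List.cons_append, List.cons.injEq] at h
        exact ⟨h.1, by rw [h.2, List.append_assoc]⟩
      obtain ⟨ha, h''⟩ := h'
      rcases List.append_eq_append_iff.1 h''.symm with ⟨w, hw1, hw2⟩ | ⟨w, hw1, hw2⟩
      · -- hw1 : s.map Sum.inr = A' ++ w, hw2 : C ++ B = w ++ blocks L
        have key : ∃ D, s.map Sum.inr = A' ++ (C ++ D) ∧ B = D ++ blocks L := by
          rcases List.append_eq_append_iff.1 hw2 with ⟨x, hx1, hx2⟩ | ⟨x, hx1, hx2⟩
          · -- hx1 : w = C ++ x, hx2 : B = x ++ blocks L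
            exact ⟨x, by rw [hw1, hx1], hx2⟩
          · -- hx1 : C = w ++ x, hx2 : blocks L = x ++ B
            have hx : x = [] := by
              cases x with
              | nil => rfl
              | cons y x' =>
                exfalso
                cases L with
                | nil => simp [blocks_nil] at hx2
                | cons p' L' =>
                  rw [blocks_cons] at hx2
                  simp only [List.cons_append, List.cons.injEq] at hx2
                  exact hno p'.1 (by rw [hx1, hx2.1]; simp)
            subst hx
            rw [List.append_nil] at hx1
            subst hx1
            refine ⟨[], by rw [hw1]; simp, ?_⟩
            simp only [List.nil_append]
            simpa using hx2.symm
        obtain ⟨D, hsD, hBD⟩ := key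
        obtain ⟨sa, scd, hs, hsa, hscd⟩ := List.map_eq_append_iff.1 hsD
        obtain ⟨sc, sd, hscd', hsc, hsd⟩ := List.map_eq_append_iff.1 hscd
        refine ⟨[], L, i, s, sa ++ sd, by simp, ?_, ?_, ?_⟩
        · rw [List.nil_append, blocks_cons, ← ha, hBD]
          simp only [List.cons_append, List.cons.injEq, true_and]
          rw [List.map_append, hsa, hsd, List.append_assoc]
        · rw [hs, hscd']
          exact (List.sublist_append_right sc sd).append_left sa
        · intro x hx
          rw [← hsc] at hx
          obtain ⟨u, hu, rfl⟩ := List.mem_map.1 hx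
          exact ⟨u, by rw [hs, hscd']; simp [hu], rfl⟩
      · -- hw1 : A' = s.map Sum.inr ++ w, hw2 : blocks L = w ++ (C ++ B)
        obtain ⟨L₁, L₂, i₀, ss, ss', hL, hAB, hsub, hmem⟩ :=
          ih w C B (by rw [hw2, List.append_assoc]) hC hno
        refine ⟨(i, s) :: L₁, L₂, i₀, ss, ss', by rw [hL]; rfl, ?_, hsub, hmem⟩
        rw [blocks_append, blocks_cons, ← ha, hw1]
        simp only [List.cons_append, List.cons.injEq, true_and]
        rw [List.append_assoc, hAB, blocks_append, List.append_assoc]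

/-- Main induction: a valid sequence of deletions that never kills a separator
deletes characters from at most `|E|` blocks. -/
lemma main {n : ℕ} {V : Type*} [DecidableEq V] :
    ∀ (E : List GEvent) (L : List (Fin n × List V)),
      (∀ e ∈ E, ∃ i j, e = GEvent.del i j) →
      ValidSeq (blocks L) E →
      (L.map Prod.fst).Nodup →
      (∀ i : Fin n, i ∈ L.map Prod.fst →
        1 ≤ cnp (applyEvents (blocks L) E) (Sum.inl i)) →
      ∃ I : Finset (Fin n), I.card ≤ E.length ∧
        ∀ u : V,
          cnp (applyEvents (blocks L) E) (Sum.inr u) < cnp (blocks L) (Sum.inr u) →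
          ∃ p ∈ L, p.1 ∈ I ∧ u ∈ p.2 := by
  intro E
  induction E with
  | nil =>
    intro L _ _ _ _
    exact ⟨∅, by simp, fun u h => absurd h (by simp [applyEvents])⟩
  | cons e E ih =>
    intro L hdel hv hnd hinl
    classical
    obtain ⟨a, b, rfl⟩ := hdel _ List.mem_cons_self
    obtain ⟨ha, hab, hb⟩ := hv.1
    set H := blocks L with hHdef
    set A := H.take (a-1) with hAdef
    set C := (H.drop (a-1)).take (b-(a-1)) with hCdef
    set B := H.drop b with hBdef
    have hCB : C ++ B = H.drop (a-1) := by
      rw [hCdef, hBdef, show H.drop b = (H.drop (a-1)).drop (b-(a-1)) by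
        rw [List.drop_drop]; congr 1; omega]
      exact List.take_append_drop _ _
    have hdecomp : H = A ++ C ++ B := by
      rw [List.append_assoc, hCB, hAdef, List.take_append_drop]
    have happly : applyEvent H (.del a b) = A ++ B := rfl
    have hClen : 0 < C.length := by
      rw [hCdef, List.length_take, List.length_drop]
      omega
    have hAE : applyEvents H (GEvent.del a b :: E) = applyEvents (A ++ B) E := by
      show applyEvents (applyEvent H (.del a b)) E = _
      rw [happly]
    have hv2 : ValidSeq (A ++ B) E := by rw [← happly]; exact hv.2
    have hdel2 : ∀ e ∈ E, ∃ i j, e = GEvent.del i j :=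
      fun e he => hdel e (List.mem_cons_of_mem _ he)
    rcases Classical.em (∃ i : Fin n, Sum.inl i ∈ C) with hex | hex
    · exfalso
      obtain ⟨i, hiC⟩ := hex
      have him : i ∈ L.map Prod.fst := by
        have hmem : Sum.inl i ∈ H := by rw [hdecomp]; simp [hiC]
        have hpos : 0 < cnp H (Sum.inl i) := cnp_pos_iff.2 hmem
        rw [count_inl_blocks] at hpos
        exact List.count_pos_iff.1 hpos
      have h1 : cnp H (Sum.inl i) = 1 := by
        rw [count_inl_blocks]; exact List.count_eq_one_of_mem hnd him
      have hCc : 1 ≤ cnp C (Sum.inl i) := cnp_pos_iff.2 hiC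
      have hsplit := congrArg (fun l => cnp l (Sum.inl i)) hdecomp
      simp only [cnp_append] at hsplit
      have hle := cnp_sublist_le (applyEvents_sublist E (A ++ B) hdel2 hv2) (Sum.inl i)
      rw [cnp_append] at hle
      have hfin := hinl i him
      rw [hAE] at hfin
      omega
    · push_neg at hex
      obtain ⟨L₁, L₂, i₀, s, s', hLdec, hABblocks, hsub', hCmem⟩ :=
        blocks_split L A C B hdecomp (by intro h; rw [h] at hClen; simp at hClen) hex
      have hfst : ((L₁ ++ (i₀, s') :: L₂).map Prod.fst) = L.map Prod.fst := by
        rw [hLdec]; simp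
      have hAEblocks : applyEvents (blocks (L₁ ++ (i₀, s') :: L₂)) E =
          applyEvents (A ++ B) E := by rw [← hABblocks]
      obtain ⟨I, hIcard, hIcov⟩ := ih (L₁ ++ (i₀, s') :: L₂) hdel2
        (by rw [← hABblocks]; exact hv2)
        (by rw [hfst]; exact hnd)
        (by intro i hi
            rw [hAEblocks, ← hAE]
            exact hinl i (hfst ▸ hi))
      refine ⟨insert i₀ I, ?_, ?_⟩
      · calc (insert i₀ I).card ≤ I.card + 1 := Finset.card_insert_le _ _
          _ ≤ E.length + 1 := by omega
          _ = (GEvent.del a b :: E).length := by simp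
      · intro u hu
        rw [hAE] at hu
        by_cases hdrop : cnp (applyEvents (A ++ B) E) (Sum.inr u) <
            cnp (blocks (L₁ ++ (i₀, s') :: L₂)) (Sum.inr u)
        · obtain ⟨p', hp', hpI, hup⟩ := hIcov u (by rw [hAEblocks]; exact hdrop)
          rcases List.mem_append.1 hp' with hmem | hmem
          · exact ⟨p', by rw [hLdec]; exact List.mem_append_left _ hmem,
              Finset.mem_insert_of_mem hpI, hup⟩
          · rcases List.mem_cons.1 hmem with rfl | hmem
            · exact ⟨(i₀, s), by rw [hLdec]; simp, Finset.mem_insert_self _ _,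
                hsub'.subset hup⟩
            · exact ⟨p', by rw [hLdec]; simp [hmem], Finset.mem_insert_of_mem hpI, hup⟩
        · have hCu : Sum.inr u ∈ C := by
            have h1 := congrArg (fun l => cnp l (Sum.inr u)) hdecomp
            simp only [cnp_append] at h1
            have h2 := congrArg (fun l => cnp l (Sum.inr u)) hABblocks
            simp only [cnp_append] at h2
            exact cnp_pos_iff.1 (by omega)
          obtain ⟨w, hws, hww⟩ := hCmem _ hCu
          have : u = w := Sum.inr_injective hww
          subst this
          exact ⟨(i₀, s), by rw [hLdec]; simp, Finset.mem_insert_self _ _, hws⟩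

end SCAux

/-- Lemma 3 of the paper: if a sequence of `k` deletion events
(no duplications) transforms the genome constructed from the SET-COVER instance
`S₁, …, Sₙ` (nonempty finite sets covering the finite universe `V`) into a genome
whose CNP is the constructed CNP, then the instance admits a set cover
(given by an index set `I`) of cardinality at most `k`. -/
theorem deletions_to_cover
    {V : Type*} [Fintype V] [DecidableEq V] (n : ℕ) (S : Fin n → Finset V)
    (hne : ∀ i, (S i).Nonempty)
    (hU : ∀ u : V, ∃ i, u ∈ S i)
    (q : Fin n → List V)
    (hq : ∀ i, (q i).Nodup)
    (hqmem : ∀ i u, u ∈ q i ↔ u ∈ S i)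
    (k : ℕ) (E : List GEvent)
    (hdel : ∀ e ∈ E, ∃ i j, e = GEvent.del i j)
    (hlen : E.length = k)
    (hvalid : ValidSeq (scGenome n q) E)
    (hcnp : cnp (applyEvents (scGenome n q) E) = scCNP n S) :
    ∃ I : Finset (Fin n), I.card ≤ k ∧ ∀ u : V, ∃ i ∈ I, u ∈ S i := by
  classical
  set L₀ : List (Fin n × List V) := (List.finRange n).map (fun i => (i, q i)) with hL₀
  have hG : scGenome n q = SCAux.blocks L₀ := by
    rw [hL₀, SCAux.blocks, List.flatMap_map, scGenome]
  have hfst : L₀.map Prod.fst = List.finRange n := by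
    rw [hL₀, List.map_map]
    simp [Function.comp_def]
  have hcount_inr : ∀ u, cnp (SCAux.blocks L₀) (Sum.inr u) =
      (Finset.univ.filter fun i => u ∈ S i).card := by
    intro u
    rw [SCAux.count_inr_blocks, Finset.card_filter, Fin.sum_univ_def, hL₀, List.map_map]
    congr 1
    apply List.map_congr_left
    intro i _
    by_cases h : u ∈ S i
    · simp only [Function.comp]
      rw [if_pos h, List.count_eq_one_of_mem (hq i) ((hqmem i u).2 h)]
    · simp only [Function.comp]
      rw [if_neg h, List.count_eq_zero.2 (fun hc => h ((hqmem i u).1 hc))]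
  obtain ⟨I, hIc, hIcov⟩ := SCAux.main E L₀ hdel (hG ▸ hvalid)
    (hfst ▸ List.nodup_finRange n)
    (by intro i _
        have hci := congrFun hcnp (Sum.inl i)
        simp only [scCNP] at hci
        rw [hG] at hci
        omega)
  refine ⟨I, hlen ▸ hIc, fun u => ?_⟩
  have hcu := congrFun hcnp (Sum.inr u)
  simp only [scCNP] at hcu
  rw [hG] at hcu
  have hf1 : 1 ≤ (Finset.univ.filter fun i => u ∈ S i).card := by
    obtain ⟨i, hi⟩ := hU u
    exact Finset.card_pos.2 ⟨i, by simp [hi]⟩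
  have hlt : cnp (applyEvents (SCAux.blocks L₀) E) (Sum.inr u) <
      cnp (SCAux.blocks L₀) (Sum.inr u) := by
    rw [hcu, hcount_inr u]
    omega
  obtain ⟨p, hp, hpI, hup⟩ := hIcov u hlt
  rw [hL₀] at hp
  obtain ⟨i, _, rfl⟩ := List.mem_map.1 hp
  exact ⟨i, hpI, (hqmem i u).1 hup⟩
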